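/- The image of the natural injection i: P_{K/k} → {0,1}^{K^×}, O ↦ (characteristic function of O ∩ K^×), is closed in the product topology, where {0,1} carries the discrete topology. Consequently P_{K/k} with the constructible topology is compact Hausdorff. -/

import Mathlib

open scoped DirectSum

/-- An `H`-graded field: a nonzero commutative ring with an internal grading by the
commutative group `H` in which every nonzero homogeneous element is invertible
(with homogeneous inverse). -/
structure GradedField (H : Type*) [CommGroup H] [DecidableEq H] (K : Type*) [CommRing K] where
  comp : H → AddSubgroup K
  one_mem : (1 : K) ∈ comp 1
  mul_mem : ∀ {g h : H} {x y : K}, x ∈ comp g → y ∈ comp h → x * y ∈ comp (g * h)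
  isInternal : DirectSum.IsInternal fun h : H => comp h
  zero_ne_one : (0 : K) ≠ 1
  inv_mem : ∀ {h : H} {x : K}, x ∈ comp h → x ≠ 0 → ∃ y ∈ comp h⁻¹, x * y = 1

namespace GradedField

variable {H : Type*} [CommGroup H] [DecidableEq H] {K : Type*} [CommRing K] (F : GradedField H K)

/-- A homogeneous element. -/
def Homogeneous (x : K) : Prop := ∃ h, x ∈ F.comp h

/-- A subring is graded if each of its elements is a sum of homogeneous elements of the
subring. -/
def IsGradedSubring (R : Subring K) : Prop :=
  ∀ x ∈ R, x ∈ AddSubgroup.closure {y : K | y ∈ R ∧ F.Homogeneous y}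

/-- A graded subfield: a graded subring closed under inverses of nonzero homogeneous
elements. -/
structure IsGradedSubfield (L : Subring K) : Prop where
  graded : F.IsGradedSubring L
  inv_mem : ∀ x ∈ L, F.Homogeneous x → x ≠ 0 → Ring.inverse x ∈ L

/-- A graded valuation ring of the graded subfield `L`: a graded subring `R ⊆ L` such that
every nonzero homogeneous element of `L` lies in `R` or has its inverse in `R`. -/
def IsGradedValRing (L R : Subring K) : Prop :=
  R ≤ L ∧ F.IsGradedSubring R ∧
    ∀ x ∈ L, F.Homogeneous x → x ≠ 0 → (x ∈ R ∨ Ring.inverse x ∈ R)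

/-- The identity component `K₁`, as a subring. -/
def oneComponent : Subring K where
  carrier := F.comp 1
  one_mem' := F.one_mem
  mul_mem' := fun ha hb => by simpa using F.mul_mem ha hb
  add_mem' := fun ha hb => (F.comp 1).add_mem ha hb
  zero_mem' := (F.comp 1).zero_mem
  neg_mem' := fun ha => (F.comp 1).neg_mem ha

theorem mem_oneComponent {x : K} : x ∈ F.oneComponent ↔ x ∈ F.comp 1 := Iff.rfl

/-- The value group `ρ(L^×) ⊆ H` of a graded subfield `L`. -/
def valueGroup (L : Subring K)
    (hL : ∀ x ∈ L, F.Homogeneous x → x ≠ 0 → Ring.inverse x ∈ L) : Subgroup H where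
  carrier := {h | ∃ x ∈ F.comp h, x ≠ 0 ∧ x ∈ L}
  one_mem' := ⟨1, F.one_mem, Ne.symm F.zero_ne_one, L.one_mem⟩
  mul_mem' := by
    rintro g h ⟨x, hx, hx0, hxL⟩ ⟨y, hy, hy0, hyL⟩
    obtain ⟨x', hx', hxx'⟩ := F.inv_mem hx hx0
    obtain ⟨y', hy', hyy'⟩ := F.inv_mem hy hy0
    refine ⟨x * y, F.mul_mem hx hy, ?_, L.mul_mem hxL hyL⟩
    intro h0
    have h1 : x * y * (x' * y') = 1 := by rw [mul_mul_mul_comm, hxx', hyy', one_mul]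
    rw [h0, zero_mul] at h1
    exact F.zero_ne_one h1
  inv_mem' := by
    rintro g ⟨x, hx, hx0, hxL⟩
    obtain ⟨y, hy, hxy⟩ := F.inv_mem hx hx0
    have hu : IsUnit x := IsUnit.of_mul_eq_one y hxy
    have hyx : Ring.inverse x = y := by
      calc Ring.inverse x = Ring.inverse x * (x * y) := by rw [hxy, mul_one]
        _ = Ring.inverse x * x * y := by ring
        _ = y := by rw [Ring.inverse_mul_cancel x hu, one_mul]
    refine ⟨y, hy, ?_, ?_⟩
    · intro h0; rw [h0, mul_zero] at hxy; exact F.zero_ne_one hxy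
    · rw [← hyx]; exact hL x hxL ⟨g, hx⟩ hx0

/-- The value group `ρ(K^×)` of the whole graded field. -/
def fullValueGroup : Subgroup H :=
  F.valueGroup ⊤ (fun _ _ _ _ => Subring.mem_top _)

/-- `K₁` as a module over `L₁ = K₁ ∩ L`. -/
def oneSubmodule (L : Subring K) : Submodule ↥(F.oneComponent ⊓ L) K where
  carrier := F.comp 1
  add_mem' := fun ha hb => (F.comp 1).add_mem ha hb
  zero_mem' := (F.comp 1).zero_mem
  smul_mem' := fun c x hx => by
    have hc : (c : K) ∈ F.comp 1 := ((Subring.mem_inf).mp c.2).1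
    have := F.mul_mem hc hx
    simpa [Subring.smul_def] using this

/-- A graded automorphism: a ring automorphism preserving each graded component. -/
def IsGradedAut (σ : RingAut K) : Prop := ∀ (h : H) (x : K), x ∈ F.comp h → σ x ∈ F.comp h

end GradedField

/-- The fixed subring `K^G` of a group of ring automorphisms. -/
def fixedSubring {K : Type*} [CommRing K] (G : Subgroup (RingAut K)) : Subring K where
  carrier := {x | ∀ σ ∈ G, σ x = x}
  one_mem' := fun σ _ => map_one σ
  mul_mem' := fun ha hb σ hσ => by rw [map_mul, ha σ hσ, hb σ hσ]
  add_mem' := fun ha hb σ hσ => by rw [map_add, ha σ hσ, hb σ hσ]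
  zero_mem' := fun σ _ => map_zero σ
  neg_mem' := fun ha σ hσ => by rw [map_neg, ha σ hσ]

theorem mem_fixedSubring {K : Type*} [CommRing K] {G : Subgroup (RingAut K)} {x : K} :
    x ∈ fixedSubring G ↔ ∀ σ ∈ G, σ x = x := Iff.rfl


namespace GradedField

variable {H : Type*} [CommGroup H] [DecidableEq H] {K : Type*} [CommRing K]
variable (F : GradedField H K)

/-- Decomposition of an element into its homogeneous components. -/
noncomputable def decompose (x : K) : ⨁ h : H, ↥(F.comp h) :=
  (Equiv.ofBijective _ F.isInternal).symm x

/-- The degree-`h` homogeneous component of `x`. -/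
noncomputable def component (h : H) (x : K) : K := (F.decompose x h : K)

/-- The inertia subgroup of `G`: graded automorphisms in `G` acting trivially on `K₁`. -/
def inertia (G : Subgroup (RingAut K)) : Subgroup (RingAut K) where
  carrier := {σ | σ ∈ G ∧ ∀ x ∈ F.comp 1, σ x = x}
  one_mem' := ⟨G.one_mem, fun _ _ => rfl⟩
  mul_mem' := fun {a b} ha hb => ⟨G.mul_mem ha.1 hb.1, fun x hx => by
    show a (b x) = x
    rw [hb.2 x hx, ha.2 x hx]⟩
  inv_mem' := fun {a} ha => ⟨G.inv_mem ha.1, fun x hx => by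
    conv_lhs => rw [← ha.2 x hx]
    exact a.symm_apply_apply x⟩

theorem mem_inertia {G : Subgroup (RingAut K)} {σ : RingAut K} :
    σ ∈ F.inertia G ↔ σ ∈ G ∧ ∀ x ∈ F.comp 1, σ x = x := Iff.rfl

end GradedField

/-- A subring `S` containing a subring `L`, viewed as an `L`-submodule of the ambient ring. -/
def Subring.toSubmoduleOver {K : Type*} [CommRing K] (L S : Subring K) (hLS : L ≤ S) :
    Submodule ↥L K where
  carrier := S
  add_mem' := fun ha hb => S.add_mem ha hb
  zero_mem' := S.zero_mem
  smul_mem' := fun c x hx => S.mul_mem (hLS c.2) hx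

section ZR

variable {H : Type*} [CommGroup H] [DecidableEq H] {K : Type*} [CommRing K]

/-- The Zariski–Riemann space of graded valuation rings of `K` containing `k₀`. -/
def GradedField.ZR (F : GradedField H K) (k₀ : Subring K) : Type _ :=
  {O : Subring K // F.IsGradedValRing ⊤ O ∧ k₀ ≤ O}

/-- The set of homogeneous units (nonzero homogeneous elements) of `K`. -/
def GradedField.HomogUnits (F : GradedField H K) : Type _ :=
  {x : K // x ≠ 0 ∧ F.Homogeneous x}

open Classical in
/-- The embedding of the Zariski–Riemann space into `{0,1}^{K^×}` via characteristic
functions. -/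
noncomputable def GradedField.chi (F : GradedField H K) (k₀ : Subring K) (O : F.ZR k₀) :
    F.HomogUnits → Bool :=
  fun x => decide (x.1 ∈ O.1)

/-- Basic open sets `P{F}∖{G}` of the constructible topology, for finite sets `F`, `G` of
homogeneous units. -/
def GradedField.constructibleBasis (F : GradedField H K) (k₀ : Subring K) :
    Set (Set (F.ZR k₀)) :=
  {s | ∃ Fs Gs : Finset K, (∀ a ∈ Fs, a ≠ 0 ∧ F.Homogeneous a) ∧
    (∀ b ∈ Gs, b ≠ 0 ∧ F.Homogeneous b) ∧
    s = {O : F.ZR k₀ | (∀ a ∈ Fs, a ∈ O.1) ∧ ∀ b ∈ Gs, b ∉ O.1}}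

/-- The constructible topology on the Zariski–Riemann space. -/
def GradedField.constructibleTop (F : GradedField H K) (k₀ : Subring K) :
    TopologicalSpace (F.ZR k₀) :=
  TopologicalSpace.generateFrom (F.constructibleBasis k₀)


namespace GradedField

variable {H : Type*} [CommGroup H] [DecidableEq H] {K : Type*} [CommRing K] (F : GradedField H K)

theorem decompose_spec (x : K) :
    (DirectSum.coeAddMonoidHom fun h => F.comp h) (F.decompose x) = x :=
  (Equiv.ofBijective _ F.isInternal).apply_symm_apply x

theorem decompose_add (x y : K) :
    F.decompose (x + y) = F.decompose x + F.decompose y := by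
  apply F.isInternal.injective
  rw [map_add, F.decompose_spec, F.decompose_spec, F.decompose_spec]

theorem decompose_neg (x : K) : F.decompose (-x) = -F.decompose x := by
  apply F.isInternal.injective
  rw [map_neg, F.decompose_spec, F.decompose_spec]

theorem decompose_zero : F.decompose 0 = 0 := by
  apply F.isInternal.injective
  rw [map_zero, F.decompose_spec]

theorem decompose_of_mem {g : H} {x : K} (hx : x ∈ F.comp g) :
    F.decompose x = DirectSum.of (fun h : H => ↥(F.comp h)) g ⟨x, hx⟩ := by
  apply F.isInternal.injective
  rw [F.decompose_spec, DirectSum.coeAddMonoidHom_of]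

theorem component_mem (h : H) (x : K) : F.component h x ∈ F.comp h :=
  (F.decompose x h).2

theorem component_add (h : H) (x y : K) :
    F.component h (x + y) = F.component h x + F.component h y := by
  unfold component
  rw [F.decompose_add]
  simp [DirectSum.add_apply]

theorem component_zero (h : H) : F.component h (0 : K) = 0 := by
  unfold component
  rw [F.decompose_zero]
  simp

theorem component_neg (h : H) (x : K) : F.component h (-x) = -F.component h x := by
  have h1 := F.component_add h (-x) x
  rw [neg_add_cancel, F.component_zero] at h1
  exact eq_neg_of_add_eq_zero_left h1.symm

theorem component_of_mem_same {g : H} {x : K} (hx : x ∈ F.comp g) :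
    F.component g x = x := by
  unfold component
  rw [F.decompose_of_mem hx, DirectSum.of_eq_same]

theorem component_of_mem_ne {g h : H} {x : K} (hx : x ∈ F.comp g) (hne : h ≠ g) :
    F.component h x = 0 := by
  unfold component
  rw [F.decompose_of_mem hx, DirectSum.of_eq_of_ne _ _ _ hne]
  simp

theorem mul_ne_zero'' {g h : H} {x y : K} (hx : x ∈ F.comp g) (hy : y ∈ F.comp h)
    (hx0 : x ≠ 0) (hy0 : y ≠ 0) : x * y ≠ 0 := by
  obtain ⟨x', _, hxx'⟩ := F.inv_mem hx hx0
  obtain ⟨y', _, hyy'⟩ := F.inv_mem hy hy0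
  intro h0
  have h1 : x * y * (x' * y') = 1 := by rw [mul_mul_mul_comm, hxx', hyy', one_mul]
  rw [h0, zero_mul] at h1
  exact F.zero_ne_one h1

theorem inverse_spec {g : H} {x : K} (hxg : x ∈ F.comp g) (hx0 : x ≠ 0) :
    Ring.inverse x ≠ 0 ∧ Ring.inverse x ∈ F.comp g⁻¹ ∧ x * Ring.inverse x = 1 := by
  obtain ⟨y, hy, hxy⟩ := F.inv_mem hxg hx0
  have hu : IsUnit x := IsUnit.of_mul_eq_one y hxy
  have hinv : Ring.inverse x = y := by
    calc Ring.inverse x = Ring.inverse x * (x * y) := by rw [hxy, mul_one]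
      _ = Ring.inverse x * x * y := by ring
      _ = y := by rw [Ring.inverse_mul_cancel x hu, one_mul]
  refine ⟨?_, ?_, ?_⟩
  · rw [hinv]; intro h0; rw [h0, mul_zero] at hxy; exact F.zero_ne_one hxy
  · rw [hinv]; exact hy
  · rw [hinv]; exact hxy

/-- Inverse of a homogeneous unit. -/
noncomputable def invHU (x : F.HomogUnits) : F.HomogUnits :=
  ⟨Ring.inverse x.1, by
    obtain ⟨hx0, g, hxg⟩ := x.2
    obtain ⟨h1, h2, _⟩ := F.inverse_spec hxg hx0
    exact ⟨h1, g⁻¹, h2⟩⟩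

/-- Product of homogeneous units. -/
def mulHU (x y : F.HomogUnits) : F.HomogUnits :=
  ⟨x.1 * y.1, by
    obtain ⟨hx0, g, hxg⟩ := x.2
    obtain ⟨hy0, h, hyh⟩ := y.2
    exact ⟨F.mul_ne_zero'' hxg hyh hx0 hy0, g * h, F.mul_mem hxg hyh⟩⟩

/-- Negation of a homogeneous unit. -/
def negHU (x : F.HomogUnits) : F.HomogUnits :=
  ⟨-x.1, by
    obtain ⟨hx0, g, hxg⟩ := x.2
    exact ⟨neg_ne_zero.mpr hx0, g, (F.comp g).neg_mem hxg⟩⟩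

/-- Sum of two same-degree homogeneous units, when nonzero. -/
def addHU (x y : F.HomogUnits) (h : H) (hx : x.1 ∈ F.comp h) (hy : y.1 ∈ F.comp h)
    (hne : x.1 + y.1 ≠ 0) : F.HomogUnits :=
  ⟨x.1 + y.1, hne, h, (F.comp h).add_mem hx hy⟩

/-- The closed conditions cutting out the image of `chi`. -/
def goodSet (k₀ : Subring K) : Set (F.HomogUnits → Bool) :=
  {f | (∀ x : F.HomogUnits, x.1 ∈ k₀ → f x = true) ∧
    (∀ x y : F.HomogUnits, f x = true → f y = true → f (F.mulHU x y) = true) ∧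
    (∀ x : F.HomogUnits, f x = true → f (F.negHU x) = true) ∧
    (∀ (x y : F.HomogUnits) (h : H) (hx : x.1 ∈ F.comp h) (hy : y.1 ∈ F.comp h)
      (hne : x.1 + y.1 ≠ 0), f x = true → f y = true → f (F.addHU x y h hx hy hne) = true) ∧
    (∀ x : F.HomogUnits, f x = true ∨ f (F.invHU x) = true)}

theorem isClosed_triple {ι : Type*} (p : Bool → Bool → Bool → Prop) (x y z : ι) :
    IsClosed {f : ι → Bool | p (f x) (f y) (f z)} := by
  have hc : Continuous fun f : ι → Bool => ((f x, f y, f z) : Bool × Bool × Bool) :=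
    (continuous_apply x).prodMk ((continuous_apply y).prodMk (continuous_apply z))
  exact (isClosed_discrete {t : Bool × Bool × Bool | p t.1 t.2.1 t.2.2}).preimage hc

theorem isClosed_goodSet (k₀ : Subring K) : IsClosed (F.goodSet k₀) := by
  have heq : F.goodSet k₀ =
      (⋂ (x : F.HomogUnits) (_ : x.1 ∈ k₀), {f : F.HomogUnits → Bool | f x = true}) ∩
      ((⋂ (x : F.HomogUnits) (y : F.HomogUnits),
          {f : F.HomogUnits → Bool | f x = true → f y = true → f (F.mulHU x y) = true}) ∩
      ((⋂ (x : F.HomogUnits),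
          {f : F.HomogUnits → Bool | f x = true → f (F.negHU x) = true}) ∩
      ((⋂ (x : F.HomogUnits) (y : F.HomogUnits) (h : H) (hx : x.1 ∈ F.comp h)
          (hy : y.1 ∈ F.comp h) (hne : x.1 + y.1 ≠ 0),
          {f : F.HomogUnits → Bool |
            f x = true → f y = true → f (F.addHU x y h hx hy hne) = true}) ∩
      (⋂ (x : F.HomogUnits),
          {f : F.HomogUnits → Bool | f x = true ∨ f (F.invHU x) = true})))) := by
    ext f
    simp only [goodSet, Set.mem_setOf_eq, Set.mem_inter_iff, Set.mem_iInter]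
  rw [heq]
  refine IsClosed.inter ?_ (IsClosed.inter ?_ (IsClosed.inter ?_ (IsClosed.inter ?_ ?_)))
  · exact isClosed_iInter fun x => isClosed_iInter fun _ =>
      isClosed_triple (fun a _ _ => a = true) x x x
  · exact isClosed_iInter fun x => isClosed_iInter fun y =>
      isClosed_triple (fun a b c => a = true → b = true → c = true) x y (F.mulHU x y)
  · exact isClosed_iInter fun x =>
      isClosed_triple (fun a b _ => a = true → b = true) x (F.negHU x) x
  · exact isClosed_iInter fun x => isClosed_iInter fun y => isClosed_iInter fun h =>
      isClosed_iInter fun hx => isClosed_iInter fun hy => isClosed_iInter fun hne =>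
      isClosed_triple (fun a b c => a = true → b = true → c = true) x y
        (F.addHU x y h hx hy hne)
  · exact isClosed_iInter fun x =>
      isClosed_triple (fun a b _ => a = true ∨ b = true) x (F.invHU x) x

theorem chi_injective (k₀ : Subring K) : Function.Injective (F.chi k₀) := by
  intro O₁ O₂ hchi
  have key : ∀ O O' : F.ZR k₀, F.chi k₀ O = F.chi k₀ O' → O.1 ≤ O'.1 := by
    intro O O' h x hx
    have h1 := O.2.1.2.1 x hx
    have h2 : AddSubgroup.closure {y : K | y ∈ O.1 ∧ F.Homogeneous y} ≤ O'.1.toAddSubgroup := by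
      rw [AddSubgroup.closure_le]
      rintro y ⟨hyO, hyh⟩
      by_cases hy0 : y = 0
      · subst hy0; exact O'.1.zero_mem
      · have := congrFun h ⟨y, hy0, hyh⟩
        simp only [GradedField.chi, decide_eq_decide] at this
        exact this.mp hyO
    exact h2 h1
  exact Subtype.ext (le_antisymm (key O₁ O₂ hchi) (key O₂ O₁ hchi.symm))

theorem range_chi_eq (k₀ : Subring K) (hk₀ : F.IsGradedSubfield k₀) :
    Set.range (F.chi k₀) = F.goodSet k₀ := by
  ext f
  constructor
  · rintro ⟨O, rfl⟩
    have hmem : ∀ x : F.HomogUnits, F.chi k₀ O x = true ↔ x.1 ∈ O.1 := by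
      intro x; simp [GradedField.chi]
    refine ⟨?_, ?_, ?_, ?_, ?_⟩
    · exact fun x hx => (hmem x).mpr (O.2.2 hx)
    · exact fun x y hx hy =>
        (hmem _).mpr (O.1.mul_mem ((hmem x).mp hx) ((hmem y).mp hy))
    · exact fun x hx => (hmem _).mpr (O.1.neg_mem ((hmem x).mp hx))
    · exact fun x y h hxh hyh hne hx hy =>
        (hmem _).mpr (O.1.add_mem ((hmem x).mp hx) ((hmem y).mp hy))
    · intro x
      rcases O.2.1.2.2 x.1 (Subring.mem_top x.1) x.2.2 x.2.1 with h | h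
      · exact Or.inl ((hmem x).mpr h)
      · exact Or.inr ((hmem _).mpr h)
  · rintro ⟨hA, hB, hC, hD, hE⟩
    classical
    set S : Set K := {x | x = 0 ∨ ∃ hx : x ≠ 0 ∧ F.Homogeneous x, f ⟨x, hx⟩ = true} with hSdef
    have memS_iff : ∀ x : F.HomogUnits, x.1 ∈ S ↔ f x = true := by
      intro x
      constructor
      · rintro (h0 | ⟨hx, hfx⟩)
        · exact absurd h0 x.2.1
        · have : (⟨x.1, hx⟩ : F.HomogUnits) = x := Subtype.ext rfl
          rwa [this] at hfx
      · intro hfx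
        exact Or.inr ⟨x.2, by rwa [show (⟨x.1, x.2⟩ : F.HomogUnits) = x from Subtype.ext rfl]⟩
    have hzeroS : (0 : K) ∈ S := Or.inl rfl
    have honeS : (1 : K) ∈ S := by
      have h1 : ((1 : K) ≠ 0 ∧ F.Homogeneous 1) := ⟨Ne.symm F.zero_ne_one, 1, F.one_mem⟩
      exact (memS_iff ⟨1, h1⟩).mpr (hA ⟨1, h1⟩ k₀.one_mem)
    have hnegS : ∀ a ∈ S, -a ∈ S := by
      rintro a (rfl | ⟨ha, hfa⟩)
      · simpa using hzeroS
      · exact (memS_iff (F.negHU ⟨a, ha⟩)).mpr (hC ⟨a, ha⟩ hfa)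
    have hmulS : ∀ a ∈ S, ∀ b ∈ S, a * b ∈ S := by
      rintro a (rfl | ⟨ha, hfa⟩) b hb
      · rw [zero_mul]; exact hzeroS
      rcases hb with rfl | ⟨hb, hfb⟩
      · rw [mul_zero]; exact hzeroS
      · exact (memS_iff (F.mulHU ⟨a, ha⟩ ⟨b, hb⟩)).mpr (hB ⟨a, ha⟩ ⟨b, hb⟩ hfa hfb)
    have hSadd : ∀ (h : H), ∀ a ∈ S, ∀ b ∈ S, a ∈ F.comp h → b ∈ F.comp h → a + b ∈ S := by
      intro h a ha b hb hah hbh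
      rcases ha with rfl | ⟨ha', hfa⟩
      · rwa [zero_add]
      rcases hb with rfl | ⟨hb', hfb⟩
      · rw [add_zero]; exact Or.inr ⟨ha', hfa⟩
      by_cases h0 : a + b = 0
      · exact Or.inl h0
      · exact (memS_iff (F.addHU ⟨a, ha'⟩ ⟨b, hb'⟩ h hah hbh h0)).mpr
          (hD ⟨a, ha'⟩ ⟨b, hb'⟩ h hah hbh h0 hfa hfb)
    set A : AddSubgroup K := AddSubgroup.closure S with hAdef
    have hAmul : ∀ a ∈ A, ∀ b ∈ A, a * b ∈ A := by
      intro a ha b hb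
      refine AddSubgroup.closure_induction (p := fun a _ => a * b ∈ A) ?_ ?_ ?_ ?_ ha
      · intro x hx
        refine AddSubgroup.closure_induction (p := fun b _ => x * b ∈ A) ?_ ?_ ?_ ?_ hb
        · intro y hy; exact AddSubgroup.subset_closure (hmulS x hx y hy)
        · show x * 0 ∈ A; rw [mul_zero]; exact A.zero_mem
        · intro y z _ _ h1 h2; show x * (y + z) ∈ A; rw [mul_add]; exact A.add_mem h1 h2
        · intro y _ h1; show x * -y ∈ A; rw [mul_neg]; exact A.neg_mem h1
      · show (0 : K) * b ∈ A; rw [zero_mul]; exact A.zero_mem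
      · intro x y _ _ h1 h2; show (x + y) * b ∈ A; rw [add_mul]; exact A.add_mem h1 h2
      · intro x _ h1; show -x * b ∈ A; rw [neg_mul]; exact A.neg_mem h1
    have hcomp : ∀ z ∈ A, ∀ h : H, F.component h z ∈ S := by
      intro z hz
      refine AddSubgroup.closure_induction (p := fun z _ => ∀ h, F.component h z ∈ S)
        ?_ ?_ ?_ ?_ hz
      · rintro x (rfl | ⟨⟨hx0, g, hxg⟩, hfx⟩) h
        · show F.component h (0:K) ∈ S; rw [F.component_zero]; exact hzeroS
        · by_cases hhg : h = g
          · rw [hhg, F.component_of_mem_same hxg]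
            exact Or.inr ⟨⟨hx0, g, hxg⟩, hfx⟩
          · rw [F.component_of_mem_ne hxg hhg]; exact hzeroS
      · intro h; show F.component h (0:K) ∈ S; rw [F.component_zero]; exact hzeroS
      · intro x y _ _ h1 h2 h
        show F.component h (x + y) ∈ S
        rw [F.component_add]
        exact hSadd h _ (h1 h) _ (h2 h) (F.component_mem h x) (F.component_mem h y)
      · intro x _ h1 h
        show F.component h (-x) ∈ S
        rw [F.component_neg]
        exact hnegS _ (h1 h)
    have hmemA : ∀ x : F.HomogUnits, x.1 ∈ A → f x = true := by
      intro x hx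
      obtain ⟨hx0, g, hxg⟩ := x.2
      have hc := hcomp x.1 hx g
      rw [F.component_of_mem_same hxg] at hc
      exact (memS_iff x).mp hc
    have hSsub : S ⊆ (A : Set K) := AddSubgroup.subset_closure
    let O : Subring K :=
      { carrier := A
        zero_mem' := A.zero_mem
        add_mem' := fun ha hb => A.add_mem ha hb
        neg_mem' := fun ha => A.neg_mem ha
        one_mem' := hSsub honeS
        mul_mem' := fun {a b} ha hb => hAmul a ha b hb }
    have hOA : ∀ x : K, x ∈ O ↔ x ∈ A := fun _ => Iff.rfl
    have hval : F.IsGradedValRing ⊤ O := by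
      refine ⟨le_top, ?_, ?_⟩
      · intro x hx
        have hsub : S ⊆ {y : K | y ∈ O ∧ F.Homogeneous y} := by
          rintro y (rfl | ⟨⟨hy0, hyh⟩, _⟩)
          · exact ⟨O.zero_mem, 1, (F.comp 1).zero_mem⟩
          · exact ⟨hSsub (Or.inr ⟨⟨hy0, hyh⟩, by assumption⟩), hyh⟩
        exact AddSubgroup.closure_mono hsub ((hOA x).mp hx)
      · intro x _ hxh hx0
        rcases hE ⟨x, hx0, hxh⟩ with h | h
        · exact Or.inl (hSsub ((memS_iff _).mpr h))
        · exact Or.inr (hSsub ((memS_iff _).mpr h))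
    have hk₀le : k₀ ≤ O := by
      intro x hx
      have h1 := hk₀.graded x hx
      have h2 : AddSubgroup.closure {y : K | y ∈ k₀ ∧ F.Homogeneous y} ≤ A := by
        rw [AddSubgroup.closure_le]
        rintro y ⟨hyk, hyh⟩
        by_cases hy0 : y = 0
        · subst hy0; exact A.zero_mem
        · exact hSsub ((memS_iff ⟨y, hy0, hyh⟩).mpr (hA ⟨y, hy0, hyh⟩ hyk))
      exact h2 h1
    refine ⟨⟨O, hval, hk₀le⟩, ?_⟩
    funext x
    show decide (x.1 ∈ O) = f x
    cases hfx : f x with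
    | true => simpa using (hOA x.1).mpr (hSsub ((memS_iff x).mpr hfx))
    | false =>
      simp only [decide_eq_false_iff_not]
      intro hxO
      rw [hmemA x hxO] at hfx
      exact Bool.true_eq_false.mp hfx

end GradedField


/-- The natural injection `i : P_{K/k₀} → {0,1}^{K^×}`, sending a graded valuation ring `O`
to the characteristic function of `O ∩ K^×`, has closed image in the product topology (with
`{0,1} = Bool` discrete); consequently `P_{K/k₀}` with the induced (constructible) topology
is compact Hausdorff. -/
theorem GradedField.isClosed_range_chi {H : Type*} [CommGroup H] [DecidableEq H]
    {K : Type*} [CommRing K] (F : GradedField H K) (k₀ : Subring K)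
    (hk₀ : F.IsGradedSubfield k₀) :
    Function.Injective (F.chi k₀) ∧ IsClosed (Set.range (F.chi k₀)) ∧
      @CompactSpace (F.ZR k₀) (TopologicalSpace.induced (F.chi k₀) inferInstance) ∧
      @T2Space (F.ZR k₀) (TopologicalSpace.induced (F.chi k₀) inferInstance) := by
  have hinj : Function.Injective (F.chi k₀) := F.chi_injective k₀
  have hclosed : IsClosed (Set.range (F.chi k₀)) := by
    rw [F.range_chi_eq k₀ hk₀]
    exact F.isClosed_goodSet k₀
  refine ⟨hinj, hclosed, ?_, ?_⟩
  · letI : TopologicalSpace (F.ZR k₀) := TopologicalSpace.induced (F.chi k₀) inferInstance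
    have hemb : Topology.IsEmbedding (F.chi k₀) := ⟨⟨rfl⟩, hinj⟩
    constructor
    rw [hemb.isCompact_iff, Set.image_univ]
    exact hclosed.isCompact
  · letI : TopologicalSpace (F.ZR k₀) := TopologicalSpace.induced (F.chi k₀) inferInstance
    have hemb : Topology.IsEmbedding (F.chi k₀) := ⟨⟨rfl⟩, hinj⟩
    exact hemb.t2Space
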